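/- Fix an integer a ≥ 3. Let U = [2, 2, 2, a, 2] and W = [2, 2, …, 2, 3, 2, 2] where the initial block of 2's in W has length a − 1 (so W has length a + 2). With ld_j as the quotient (d(prefix before j) + d(suffix after j))/d(whole chain) for the tridiagonal discriminant d, one has ld_3(U) + ld_5(U) = 3a/(4a − 5), ld_a(W) = (a + 3)/(4a + 3), and the total ld_3(U) + ld_5(U) + ld_a(W) = 3a/(4a − 5) + (a + 3)/(4a + 3) > 1. -/

import Mathlib

/-- The tridiagonal matrix with diagonal entries given by the list `T`
and entries `-1` on the sub- and super-diagonal. -/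
def tridiagMatrix (T : List ℤ) : Matrix (Fin T.length) (Fin T.length) ℤ :=
  Matrix.of fun i j =>
    if i = j then T.get i
    else if (i : ℕ) + 1 = (j : ℕ) ∨ (j : ℕ) + 1 = (i : ℕ) then -1 else 0

/-- The discriminant of a chain `T`: the determinant of the associated tridiagonal
matrix (so the discriminant of the empty list is `1`). -/
def chainDisc (T : List ℤ) : ℤ := (tridiagMatrix T).det

/-- The log discrepancy of the `j`-th entry (1-indexed) of the chain `T`:
`ld_j(T) = (d(T_{<j}) + d(T_{>j})) / d(T)`. -/
def chainLd (T : List ℤ) (j : ℕ) : ℚ :=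
  ((chainDisc (T.take (j - 1)) : ℚ) + (chainDisc (T.drop j) : ℚ)) / (chainDisc T : ℚ)

lemma tridiag_submatrix (x : ℤ) (T : List ℤ) :
    (tridiagMatrix (x :: T)).submatrix Fin.succ Fin.succ = tridiagMatrix T := by
  ext i j
  simp only [tridiagMatrix, Matrix.submatrix_apply, Matrix.of_apply, Fin.succ_inj,
    List.get_cons_succ, Fin.val_succ]
  have h : ((i:ℕ)+1+1 = (j:ℕ)+1 ∨ (j:ℕ)+1+1 = (i:ℕ)+1) ↔ ((i:ℕ)+1 = j ∨ (j:ℕ)+1 = i) := by omega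
  have hg : (x :: T).get i.succ = T.get i := rfl
  rw [hg]
  simp only [h]

lemma chainDisc_nil : chainDisc [] = 1 := by
  simp [chainDisc, Matrix.det_fin_zero]

lemma chainDisc_singleton (x : ℤ) : chainDisc [x] = x := by
  simp [chainDisc, Matrix.det_fin_one, tridiagMatrix]

lemma minor1 (x y : ℤ) (T : List ℤ) :
    ((tridiagMatrix (x :: y :: T)).submatrix Fin.succ
        ((Fin.succ 0 : Fin (T.length + 2)).succAbove)).det
      = - (tridiagMatrix T).det := by
  rw [Matrix.det_succ_column_zero]
  rw [Fin.sum_univ_succ (n := T.length)]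
  have h0 : ((Fin.succ 0 : Fin (T.length + 2)).succAbove 0) = 0 := Fin.succ_succAbove_zero 0
  have hz : ∀ i : Fin T.length,
      (tridiagMatrix (x :: y :: T)).submatrix Fin.succ ((Fin.succ 0 : Fin (T.length + 2)).succAbove) i.succ
        (0 : Fin (T.length + 1)) = 0 := by
    intro i
    rw [Matrix.submatrix_apply, h0]
    simp only [tridiagMatrix, Matrix.of_apply, Fin.ext_iff, Fin.val_succ, Fin.val_zero]
    split_ifs <;> first | rfl | exact ‹False›.elim | (simp_all; omega) | simp_all | omega
  rw [Finset.sum_congr rfl fun i _ => by rw [hz i]]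
  simp only [mul_zero, zero_mul, mul_comm, Finset.sum_const_zero, add_zero]
  have he : (tridiagMatrix (x :: y :: T)).submatrix Fin.succ ((Fin.succ 0 : Fin (T.length + 2)).succAbove)
      (0 : Fin (T.length + 1)) (0 : Fin (T.length + 1)) = -1 := by
    rw [Matrix.submatrix_apply, h0]
    simp only [tridiagMatrix, Matrix.of_apply, Fin.ext_iff, Fin.val_succ, Fin.val_zero]
    split_ifs <;> first | rfl | exact ‹False›.elim | (simp_all; omega) | simp_all | omega
  rw [he]
  have hcol : (Fin.succ 0 : Fin (T.length + 2)).succAbove ∘ Fin.succ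
      = Fin.succ ∘ Fin.succ := by
    funext j
    simp [Fin.succ_succAbove_succ]
  rw [Fin.succAbove_zero, Matrix.submatrix_submatrix, hcol,
    show (Fin.succ ∘ Fin.succ : Fin T.length → Fin (T.length + 2)) =
      Fin.succ ∘ Fin.succ from rfl]
  have : (tridiagMatrix (x :: y :: T)).submatrix (Fin.succ ∘ Fin.succ) (Fin.succ ∘ Fin.succ)
      = tridiagMatrix T := by
    rw [← Matrix.submatrix_submatrix, tridiag_submatrix, tridiag_submatrix]
  rw [this]
  simp

lemma chainDisc_cons (x y : ℤ) (T : List ℤ) :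
    chainDisc (x :: y :: T) = x * chainDisc (y :: T) - chainDisc T := by
  have hM : chainDisc (x :: y :: T) = (tridiagMatrix (x :: y :: T)).det := rfl
  rw [chainDisc, Matrix.det_succ_row_zero]
  simp only [List.length_cons, Fin.sum_univ_succ]
  have e00 : tridiagMatrix (x :: y :: T) (0 : Fin (T.length + 2)) (0 : Fin (T.length + 2)) = x := by simp [tridiagMatrix]
  have e01 : tridiagMatrix (x :: y :: T) (0 : Fin (T.length + 2)) (Fin.succ (0 : Fin (T.length + 1))) = -1 := by
    simp only [tridiagMatrix, Matrix.of_apply, Fin.ext_iff, Fin.val_succ, Fin.val_zero]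
    split_ifs <;> simp_all
  have etail : ∀ i : Fin T.length, tridiagMatrix (x :: y :: T) (0 : Fin (T.length + 2)) i.succ.succ = 0 := by
    intro i
    simp only [tridiagMatrix, Matrix.of_apply, Fin.ext_iff, Fin.val_succ, Fin.val_zero]
    split_ifs <;> first | rfl | exact ‹False›.elim | simp_all
  rw [Fin.succAbove_zero, tridiag_submatrix, minor1]
  simp only [e00, e01, etail, mul_zero, zero_mul, Finset.sum_const_zero, add_zero,
    Fin.val_succ, Fin.val_zero, pow_zero, pow_one, chainDisc]
  norm_num [sub_eq_add_neg]

lemma chainDisc_replicate : ∀ n : ℕ, chainDisc (List.replicate n 2) = n + 1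
  | 0 => chainDisc_nil
  | 1 => chainDisc_singleton 2
  | (n+2) => by
    rw [show List.replicate (n+2) (2:ℤ) = 2 :: 2 :: List.replicate n 2 from rfl,
      chainDisc_cons, show (2:ℤ) :: List.replicate n 2 = List.replicate (n+1) 2 from rfl,
      chainDisc_replicate (n+1), chainDisc_replicate n]
    push_cast; ring

lemma chainDisc_two : chainDisc [2] = 2 := chainDisc_singleton 2
lemma chainDisc_22 : chainDisc [2, 2] = 3 := by
  rw [chainDisc_cons, chainDisc_singleton, chainDisc_nil]; norm_num
lemma chainDisc_322 : chainDisc [3, 2, 2] = 7 := by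
  rw [chainDisc_cons, chainDisc_22, chainDisc_singleton]; norm_num
lemma chainDisc_2322 : chainDisc [2, 3, 2, 2] = 11 := by
  rw [chainDisc_cons, chainDisc_322, chainDisc_22]; norm_num

lemma chainDisc_rep322 : ∀ n : ℕ, chainDisc (List.replicate n 2 ++ [3, 2, 2]) = 4 * n + 7
  | 0 => by simpa using chainDisc_322
  | 1 => by simpa using chainDisc_2322
  | (n+2) => by
    rw [show List.replicate (n+2) (2:ℤ) ++ [3,2,2]
        = 2 :: 2 :: (List.replicate n 2 ++ [3,2,2]) from rfl,
      chainDisc_cons,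
      show (2:ℤ) :: (List.replicate n 2 ++ [3,2,2])
        = List.replicate (n+1) 2 ++ [3,2,2] from rfl,
      chainDisc_rep322 (n+1), chainDisc_rep322 n]
    push_cast; ring

lemma chainDisc_a2 (a : ℤ) : chainDisc [a, 2] = 2 * a - 1 := by
  rw [chainDisc_cons, chainDisc_singleton, chainDisc_nil]; ring
lemma chainDisc_2a2 (a : ℤ) : chainDisc [2, a, 2] = 4 * a - 4 := by
  rw [chainDisc_cons, chainDisc_a2, chainDisc_singleton]; ring
lemma chainDisc_22a2 (a : ℤ) : chainDisc [2, 2, a, 2] = 6 * a - 7 := by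
  rw [chainDisc_cons, chainDisc_2a2, chainDisc_a2]; ring
lemma chainDisc_222a2 (a : ℤ) : chainDisc [2, 2, 2, a, 2] = 8 * a - 10 := by
  rw [chainDisc_cons, chainDisc_22a2, chainDisc_2a2]; ring
lemma chainDisc_2a (a : ℤ) : chainDisc [2, a] = 2 * a - 1 := by
  rw [chainDisc_cons, chainDisc_nil, chainDisc_singleton]
lemma chainDisc_22a (a : ℤ) : chainDisc [2, 2, a] = 3 * a - 2 := by
  rw [chainDisc_cons, chainDisc_2a, chainDisc_singleton]; ring
lemma chainDisc_222a (a : ℤ) : chainDisc [2, 2, 2, a] = 4 * a - 3 := by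
  rw [chainDisc_cons, chainDisc_22a, chainDisc_2a]; ring

/-- **Del Pezzo criterion for the quadruple `(a, 2, 2, 2)`.**
For `a ≥ 3`, with `U = [2, 2, 2, a, 2]` and
`W = [2, …, 2, 3, 2, 2]` (the initial block of `2`'s having length `a − 1`), one has
`ld_3(U) + ld_5(U) = 3a/(4a − 5)`, `ld_a(W) = (a + 3)/(4a + 3)`, and
`ld_3(U) + ld_5(U) + ld_a(W) > 1`. -/
theorem quadruple_a222 (a : ℕ) (ha : 3 ≤ a) :
    chainLd [2, 2, 2, (a : ℤ), 2] 3 + chainLd [2, 2, 2, (a : ℤ), 2] 5 =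
        3 * (a : ℚ) / (4 * (a : ℚ) - 5) ∧
    chainLd (List.replicate (a - 1) (2 : ℤ) ++ [3, 2, 2]) a =
        ((a : ℚ) + 3) / (4 * (a : ℚ) + 3) ∧
    1 < chainLd [2, 2, 2, (a : ℤ), 2] 3 + chainLd [2, 2, 2, (a : ℤ), 2] 5 +
        chainLd (List.replicate (a - 1) (2 : ℤ) ++ [3, 2, 2]) a := by
  have haQ : (3 : ℚ) ≤ (a : ℚ) := by exact_mod_cast ha
  have h3 : chainLd [2, 2, 2, (a : ℤ), 2] 3
      = ((2 * (a:ℚ) + 2)) / (8 * (a:ℚ) - 10) := by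
    rw [chainLd, show List.take 2 [2, 2, 2, (a:ℤ), 2] = [2, 2] from rfl,
      show List.drop 3 [2, 2, 2, (a:ℤ), 2] = [(a:ℤ), 2] from rfl,
      chainDisc_22, chainDisc_a2, chainDisc_222a2]
    push_cast; ring_nf
  have h5 : chainLd [2, 2, 2, (a : ℤ), 2] 5
      = ((4 * (a:ℚ) - 2)) / (8 * (a:ℚ) - 10) := by
    rw [chainLd, show List.take 4 [2, 2, 2, (a:ℤ), 2] = [2, 2, 2, (a:ℤ)] from rfl,
      show List.drop 5 [2, 2, 2, (a:ℤ), 2] = [] from rfl,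
      chainDisc_nil, chainDisc_222a, chainDisc_222a2]
    push_cast; ring_nf
  have hW : chainLd (List.replicate (a - 1) (2 : ℤ) ++ [3, 2, 2]) a
      = (((a:ℚ)) + 3) / (4 * (a:ℚ) + 3) := by
    rw [chainLd,
      List.take_left' (by simp : (List.replicate (a-1) (2:ℤ)).length = a - 1),
      show List.replicate (a-1) (2:ℤ) ++ [3,2,2]
        = (List.replicate (a-1) 2 ++ [3]) ++ [2,2] by simp,
      List.drop_left' (by simp; omega : (List.replicate (a-1) (2:ℤ) ++ [3]).length = a),
      show (List.replicate (a-1) (2:ℤ) ++ [3]) ++ [2,2]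
        = List.replicate (a-1) 2 ++ [3,2,2] by simp,
      chainDisc_replicate, chainDisc_22, chainDisc_rep322]
    have h1 : ((a - 1 : ℕ) : ℚ) = (a : ℚ) - 1 := by
      have : 1 ≤ a := by omega
      push_cast [this]; ring
    push_cast [h1]
    ring_nf
  have hden1 : 8 * (a:ℚ) - 10 ≠ 0 := by nlinarith
  have hden2 : 4 * (a:ℚ) - 5 ≠ 0 := by nlinarith
  have hden3 : 4 * (a:ℚ) + 3 ≠ 0 := by nlinarith
  have hsum : chainLd [2, 2, 2, (a : ℤ), 2] 3 + chainLd [2, 2, 2, (a : ℤ), 2] 5 =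
      3 * (a : ℚ) / (4 * (a : ℚ) - 5) := by
    rw [h3, h5]
    rw [← add_div, div_eq_div_iff hden1 hden2]
    ring
  refine ⟨hsum, hW, ?_⟩
  rw [hsum, hW]
  rw [div_add_div _ _ hden2 hden3, lt_div_iff₀ (by nlinarith)]
  nlinarith
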